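/- Let n ≥ 3 and m ≥ 3, and let L : M_n(ℂ) → M_n(ℂ) be a ℂ-linear map. Then tr(L(X) · X^{m−1}) = 0 for all X ∈ M_n(ℂ) if and only if there exists B ∈ M_n(ℂ) such that L(X) = BX − XB for all X ∈ M_n(ℂ). (The Lie algebra annihilator of tr(X^m) in End(M_n(ℂ)) is exactly the image of the adjoint representation ad(B) = [B, ·].) -/

import Mathlib

open Matrix

noncomputable section
namespace AnnihAux

variable {n : ℕ}

def E (i j : Fin n) : Matrix (Fin n) (Fin n) ℂ := Matrix.single i j 1

lemma E_mul_same (i j k : Fin n) : E i j * E j k = E i k := by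
  simp [E]

lemma E_mul_ne {j k : Fin n} (h : j ≠ k) (i l : Fin n) : E i j * E k l = 0 :=
  Matrix.single_mul_single_of_ne (c := (1:ℂ)) (d := (1:ℂ)) i j k h

lemma E_mul (i j k l : Fin n) : E i j * E k l = if j = k then E i l else 0 := by
  by_cases h : j = k
  · subst h; rw [E_mul_same, if_pos rfl]
  · rw [E_mul_ne h, if_neg h]

lemma trace_mul_E (A : Matrix (Fin n) (Fin n) ℂ) (i j : Fin n) :
    (A * E i j).trace = A j i := by
  simp [E, trace, diag, mul_apply, Matrix.single, ite_and]

lemma pow_idem {X : Matrix (Fin n) (Fin n) ℂ} (h : X * X = X) :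
    ∀ k, X ^ (k + 1) = X
  | 0 => pow_one X
  | (k+1) => by rw [pow_succ, pow_idem h k, h]

lemma pow_sq {X : Matrix (Fin n) (Fin n) ℂ} (h : X * X * X = X * X) :
    ∀ k, X ^ (k + 2) = X * X
  | 0 => sq X
  | (k+1) => by rw [pow_succ, pow_sq h k, h]

lemma conj_pow {g h : Matrix (Fin n) (Fin n) ℂ} (hhg : h * g = 1)
    (X : Matrix (Fin n) (Fin n) ℂ) : ∀ k, (g * X * h) ^ (k+1) = g * X^(k+1) * h := by
  intro k
  induction k with
  | zero => rw [pow_one, pow_one]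
  | succ k ih =>
      rw [pow_succ, ih, pow_succ X (k+1)]
      simp only [mul_assoc]
      rw [← mul_assoc h g, hhg, one_mul]

def conjL (L : Matrix (Fin n) (Fin n) ℂ →ₗ[ℂ] Matrix (Fin n) (Fin n) ℂ)
    (g h : Matrix (Fin n) (Fin n) ℂ) :
    Matrix (Fin n) (Fin n) ℂ →ₗ[ℂ] Matrix (Fin n) (Fin n) ℂ where
  toFun Y := h * L (g * Y * h) * g
  map_add' A B := by simp [mul_add, add_mul]
  map_smul' c A := by simp [mul_smul_comm, smul_mul_assoc]

@[simp] lemma conjL_apply (L : Matrix (Fin n) (Fin n) ℂ →ₗ[ℂ] Matrix (Fin n) (Fin n) ℂ)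
    (g h Y : Matrix (Fin n) (Fin n) ℂ) : conjL L g h Y = h * L (g * Y * h) * g := rfl

variable {m : ℕ}

lemma powm_idem (hm : 3 ≤ m) {X : Matrix (Fin n) (Fin n) ℂ} (h : X * X = X) :
    X ^ (m-1) = X := by
  obtain ⟨k, hk⟩ : ∃ k, m - 1 = k + 1 := ⟨m - 2, by omega⟩
  rw [hk]; exact pow_idem h k

lemma powm_sq (hm : 3 ≤ m) {X : Matrix (Fin n) (Fin n) ℂ} (h : X * X * X = X * X) :
    X ^ (m-1) = X * X := by
  obtain ⟨k, hk⟩ : ∃ k, m - 1 = k + 2 := ⟨m - 3, by omega⟩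
  rw [hk]; exact pow_sq h k

variable (hm : 3 ≤ m) (L : Matrix (Fin n) (Fin n) ℂ →ₗ[ℂ] Matrix (Fin n) (Fin n) ℂ)
  (hL : ∀ X, (L X * X ^ (m-1)).trace = 0)

include hm hL

lemma r1 (p : Fin n) : L (E p p) p p = 0 := by
  have h := hL (E p p)
  rwa [powm_idem hm (E_mul_same p p p), trace_mul_E] at h

lemma r2 {p q : Fin n} (hpq : p ≠ q) : L (E p q) q p = 0 := by
  have h1 := hL (E p p + E p q)
  have h2 := hL (E p p - E p q)
  have e1 : (E p p + E p q) * (E p p + E p q) = E p p + E p q := by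
    rw [add_mul, mul_add, mul_add, E_mul_same, E_mul_same, E_mul_ne hpq.symm,
      E_mul_ne hpq.symm]
    abel
  have e2 : (E p p - E p q) * (E p p - E p q) = E p p - E p q := by
    rw [sub_mul, mul_sub, mul_sub, E_mul_same, E_mul_same, E_mul_ne hpq.symm,
      E_mul_ne hpq.symm]
    abel
  rw [powm_idem hm e1] at h1
  rw [powm_idem hm e2] at h2
  simp only [map_add, map_sub, add_mul, sub_mul, mul_add, mul_sub,
    trace_add, trace_sub, trace_mul_E] at h1 h2
  have h0 := r1 hm L hL p
  linear_combination h1/2 + h2/2 - h0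

lemma r3 {p q : Fin n} (hpq : p ≠ q) : L (E p p) q p + L (E p q) p p = 0 := by
  have h1 := hL (E p p + E p q)
  have e1 : (E p p + E p q) * (E p p + E p q) = E p p + E p q := by
    rw [add_mul, mul_add, mul_add, E_mul_same, E_mul_same, E_mul_ne hpq.symm,
      E_mul_ne hpq.symm]
    abel
  rw [powm_idem hm e1] at h1
  simp only [map_add, add_mul, mul_add, trace_add, trace_mul_E] at h1
  have h0 := r1 hm L hL p
  have hr2 := r2 hm L hL hpq
  linear_combination h1 - h0 - hr2

lemma r4 {p q : Fin n} (hpq : p ≠ q) : L (E q q) q p + L (E p q) q q = 0 := by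
  have h1 := hL (E q q + E p q)
  have e1 : (E q q + E p q) * (E q q + E p q) = E q q + E p q := by
    rw [add_mul, mul_add, mul_add, E_mul_same, E_mul_same, E_mul_ne hpq.symm,
      E_mul_ne hpq.symm]
    abel
  rw [powm_idem hm e1] at h1
  simp only [map_add, add_mul, mul_add, trace_add, trace_mul_E] at h1
  have h0 := r1 hm L hL q
  have hr2 := r2 hm L hL hpq
  linear_combination h1 - h0 - hr2

lemma r5 {p q l : Fin n} (hpq : p ≠ q) (hlp : l ≠ p) (hlq : l ≠ q) :
    L (E p q) l l = 0 := by
  have h1 := hL (E l l + E p q)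
  have e1 : (E l l + E p q) * (E l l + E p q) = E l l := by
    rw [add_mul, mul_add, mul_add, E_mul_same, E_mul_ne hlp, E_mul_ne (Ne.symm hlq),
      E_mul_ne hpq.symm]
    abel
  have e2 : (E l l + E p q) * (E l l + E p q) * ((E l l) + E p q)
      = (E l l + E p q) * (E l l + E p q) := by
    rw [e1, mul_add, E_mul_same, E_mul_ne hlp, add_zero]
  rw [powm_sq hm e2, e1] at h1
  simp only [map_add, add_mul, mul_add, trace_add, trace_mul_E] at h1
  have h0 := r1 hm L hL l
  linear_combination h1 - h0


lemma r6 {k l : Fin n} (hkl : k ≠ l) : L (E l l) k k = 0 := by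
  have hpow : ∀ (t : ℂ) (j : ℕ), (t • E l l + E k k) ^ (j+1)
      = t^(j+1) • E l l + E k k := by
    intro t j
    induction j with
    | zero => rw [pow_one, pow_one]
    | succ j ih =>
        rw [pow_succ, ih]
        simp only [add_mul, mul_add, smul_mul_assoc, mul_smul_comm, E_mul_same,
          E_mul_ne hkl.symm, E_mul_ne hkl, smul_zero, add_zero, zero_add]
        module
  obtain ⟨j, hj⟩ : ∃ j, m - 1 = j + 1 := ⟨m - 2, by omega⟩
  have hj1 : 1 ≤ j := by omega
  have h1 := hL ((1:ℂ) • E l l + E k k)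
  have h2 := hL ((2:ℂ) • E l l + E k k)
  rw [hj, hpow] at h1 h2
  simp only [map_add, _root_.map_smul, add_mul, mul_add, smul_mul_assoc, mul_smul_comm,
    trace_add, trace_smul, trace_mul_E, smul_eq_mul, smul_smul, one_pow, one_mul,
    mul_one] at h1 h2
  have h0l := r1 hm L hL l
  have h0k := r1 hm L hL k
  have ha : L (E k k) l l + L (E l l) k k = 0 := by
    linear_combination h1 - h0l - h0k
  have key : (2 - 2*(2:ℂ)^j) * L (E l l) k k = 0 := by
    linear_combination h2 - (2*(2:ℂ)^j)*ha - (4*(2:ℂ)^j)*h0l - h0k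
  rcases mul_eq_zero.mp key with h | h
  · exfalso
    have h1' : (2:ℂ)^j = 1 := by linear_combination -h/2
    have h4 : ((2^j : ℕ) : ℂ) = ((1:ℕ) : ℂ) := by push_cast; simpa using h1'
    have := Nat.cast_injective (R := ℂ) h4
    have h2j : 2 ≤ 2^j := by
      calc 2 = 2^1 := (pow_one 2).symm
      _ ≤ 2^j := Nat.pow_le_pow_right (by norm_num) hj1
    omega
  · exact h

lemma r6' {k l : Fin n} (hkl : k ≠ l) : L (E l l) k k = 0 ∧ L (E k k) l l = 0 :=
  ⟨r6 hm L hL hkl, r6 hm L hL hkl.symm⟩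

lemma r7 {p q l : Fin n} (hpq : p ≠ q) (hlp : l ≠ p) (hlq : l ≠ q) :
    L (E l l) q p = 0 := by
  have h1 := hL (E p p + E l l + E p q)
  have e1 : (E p p + E l l + E p q) * (E p p + E l l + E p q)
      = E p p + E l l + E p q := by
    rw [add_mul, add_mul, mul_add, mul_add, mul_add, mul_add, mul_add, mul_add,
      E_mul_same, E_mul_same, E_mul_same, E_mul_ne (Ne.symm hlp), E_mul_ne hlp,
      E_mul_ne hlp, E_mul_ne hpq.symm, E_mul_ne (Ne.symm hlq), E_mul_ne hpq.symm]
    abel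
  rw [powm_idem hm e1] at h1
  simp only [map_add, add_mul, mul_add, trace_add, trace_mul_E] at h1
  have h0p := r1 hm L hL p
  have h0l := r1 hm L hL l
  have h01 := r6 hm L hL hlp  -- L (E p p) l l = 0
  have h02 := r6 hm L hL (Ne.symm hlp)  -- L (E l l) p p = 0
  have h03 := r3 hm L hL hpq
  have h04 := r5 hm L hL hpq hlp hlq
  have h05 := r2 hm L hL hpq
  linear_combination h1 - h0p - h0l - h01 - h02 - h03 - h04 - h05

lemma r8 {p q : Fin n} (hpq : p ≠ q) : L (E p p) q p + L (E q q) q p = 0 := by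
  have hpow : ∀ (j : ℕ), (E p p + E q q + E p q) ^ (j+1)
      = E p p + E q q + ((j+1 : ℕ) : ℂ) • E p q := by
    intro j
    induction j with
    | zero => rw [pow_one]; norm_num
    | succ j ih =>
        rw [pow_succ, ih, add_mul, add_mul, mul_add, mul_add, mul_add, mul_add,
          mul_add, mul_add, smul_mul_assoc, smul_mul_assoc, smul_mul_assoc,
          E_mul_same, E_mul_same, E_mul_same, E_mul_same,
          E_mul_ne hpq.symm, E_mul_ne hpq, E_mul_ne hpq.symm, E_mul_ne hpq.symm,
          E_mul_ne hpq.symm]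
        push_cast
        module
  obtain ⟨j, hj⟩ : ∃ j, m - 1 = j + 1 := ⟨m - 2, by omega⟩
  have h1 := hL (E p p + E q q + E p q)
  rw [hj, hpow] at h1
  simp only [map_add, add_mul, mul_add, mul_smul_comm, trace_add, trace_smul,
    trace_mul_E, smul_eq_mul] at h1
  have h0p := r1 hm L hL p
  have h0q := r1 hm L hL q
  have h01 := r6 hm L hL hpq  -- L (E q q) p p = 0
  have h02 := r6 hm L hL hpq.symm  -- L (E p p) q q = 0
  have h03 := r2 hm L hL hpq
  have h04 := r3 hm L hL hpq
  have h05 := r4 hm L hL hpq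
  have key : (((j+1 : ℕ) : ℂ) - 1) * (L (E p p) q p + L (E q q) q p) = 0 := by
    linear_combination h1 - h0p - h0q - h01 - h02 - (((j+1 : ℕ) : ℂ)) * h03 - h04 - h05
  rcases mul_eq_zero.mp key with h | h
  · exfalso
    have hj1 : 1 ≤ j := by omega
    push_cast at h
    have hj0 : ((j:ℕ) : ℂ) = 0 := by linear_combination h
    have := Nat.cast_eq_zero.mp hj0
    omega
  · exact h


lemma r10 {p q a : Fin n} (hpq : p ≠ q) (haq : a ≠ q) (hap : a ≠ p) :
    L (E p q) a p = 0 := by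
  have h1 := hL (E a a + E p q + E p a)
  have e1 : (E a a + E p q + E p a) * (E a a + E p q + E p a) = E a a + E p a := by
    simp [add_mul, mul_add, E_mul, hpq, haq, hap, hpq.symm, haq.symm, hap.symm]
    try abel
  have e2 : (E a a + E p q + E p a) * (E a a + E p q + E p a) * (E a a + E p q + E p a)
      = (E a a + E p q + E p a) * (E a a + E p q + E p a) := by
    rw [e1]
    simp [add_mul, mul_add, E_mul, hpq, haq, hap, hpq.symm, haq.symm, hap.symm]
    try abel
  rw [powm_sq hm e2, e1] at h1
  simp only [map_add, add_mul, mul_add, trace_add, trace_mul_E] at h1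
  have k1 := r1 hm L hL a
  have k2 := r5 hm L hL hpq hap haq
  have k3 := r4 hm L hL (show p ≠ a from fun h => hap h.symm)
  have k4 := r2 hm L hL (show p ≠ a from fun h => hap h.symm)
  linear_combination h1 - k1 - k2 - k3 - k4

lemma r11 {p q a b : Fin n} (hpq : p ≠ q) (hab : a ≠ b) (hap : a ≠ p)
    (hbp : b ≠ p) (hbq : b ≠ q) : L (E p q) a b = 0 := by
  have h1 := hL (E b b + E p q + E b a)
  have e1 : (E b b + E p q + E b a) * (E b b + E p q + E b a) = E b b + E b a := by
    simp [add_mul, mul_add, E_mul, hpq, hab, hap, hbp, hbq,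
      hpq.symm, hab.symm, hap.symm, hbp.symm, hbq.symm]
    try abel
  have e2 : (E b b + E p q + E b a) * (E b b + E p q + E b a) * (E b b + E p q + E b a)
      = (E b b + E p q + E b a) * (E b b + E p q + E b a) := by
    rw [e1]
    simp [add_mul, mul_add, E_mul, hpq, hab, hap, hbp, hbq,
      hpq.symm, hab.symm, hap.symm, hbp.symm, hbq.symm]
    try abel
  rw [powm_sq hm e2, e1] at h1
  simp only [map_add, add_mul, mul_add, trace_add, trace_mul_E] at h1
  have k1 := r1 hm L hL b
  have k2 := r5 hm L hL hpq hbp hbq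
  have k3 := r3 hm L hL (show b ≠ a from hab.symm)
  have k4 := r2 hm L hL (show b ≠ a from hab.symm)
  linear_combination h1 - k1 - k2 - k3 - k4

lemma r9 {p q a : Fin n} (hpq : p ≠ q) (haq : a ≠ q) (hap : a ≠ p) :
    L (E a a) a p + L (E p q) a q = 0 := by
  have h1 := hL (E a a + E p q + E q a)
  have e1 : (E a a + E p q + E q a) * (E a a + E p q + E q a)
      = E a a + E q a + E p a := by
    simp [add_mul, mul_add, E_mul, hpq, haq, hap, hpq.symm, haq.symm, hap.symm]
    try abel
    try abel
  have e2 : (E a a + E p q + E q a) * (E a a + E p q + E q a) * (E a a + E p q + E q a)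
      = (E a a + E p q + E q a) * (E a a + E p q + E q a) := by
    rw [e1]
    simp [add_mul, mul_add, E_mul, hpq, haq, hap, hpq.symm, haq.symm, hap.symm]
    try abel
    try abel
  rw [powm_sq hm e2, e1] at h1
  simp only [map_add, add_mul, mul_add, trace_add, trace_mul_E] at h1
  have k1 := r1 hm L hL a
  have k2 := r4 hm L hL (show q ≠ a from fun h => haq h.symm)
  have k3 := r5 hm L hL hpq hap haq
  have k4 := r10 hm L hL hpq haq hap
  have k5 := r2 hm L hL (show q ≠ a from fun h => haq h.symm)
  have k6 := r11 hm L hL (show q ≠ a from fun h => haq h.symm) hap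
    (show a ≠ q from haq) (show p ≠ q from hpq) (show p ≠ a from fun h => hap h.symm)
  linear_combination h1 - k1 - k2 - k3 - k4 - k5 - k6

lemma r12 {p q a : Fin n} (hpq : p ≠ q) (haq : a ≠ q) (hap : a ≠ p) :
    L (E p p) a p + L (E q a) q p = 0 := by
  have h1 := hL (E p p + E p q + E q a)
  have e1 : (E p p + E p q + E q a) * (E p p + E p q + E q a)
      = E p p + E p q + E p a := by
    simp [add_mul, mul_add, E_mul, hpq, haq, hap, hpq.symm, haq.symm, hap.symm]
    try abel
  have e2 : (E p p + E p q + E q a) * (E p p + E p q + E q a) * (E p p + E p q + E q a)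
      = (E p p + E p q + E q a) * (E p p + E p q + E q a) := by
    rw [e1]
    simp [add_mul, mul_add, E_mul, hpq, haq, hap, hpq.symm, haq.symm, hap.symm]
    try abel
  rw [powm_sq hm e2, e1] at h1
  simp only [map_add, add_mul, mul_add, trace_add, trace_mul_E] at h1
  have k1 := r1 hm L hL p
  have k2 := r3 hm L hL hpq
  have k3 := r2 hm L hL hpq
  have k4 := r10 hm L hL hpq haq hap
  have k5 := r5 hm L hL (show q ≠ a from fun h => haq h.symm)
    (show p ≠ q from hpq) (show p ≠ a from fun h => hap h.symm)
  have k6 := r11 hm L hL (show q ≠ a from fun h => haq h.symm) hap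
    (show a ≠ q from haq) (show p ≠ q from hpq) (show p ≠ a from fun h => hap h.symm)
  linear_combination h1 - k1 - k2 - k3 - k4 - k5 - k6

lemma s_form {P Q b : Fin n} (hPQ : P ≠ Q) (hbP : b ≠ P) (hbQ : b ≠ Q) :
    L (E P Q) P b = L (E Q Q) Q b := by
  have k1 := r12 hm L hL hbP (show Q ≠ P from hPQ.symm) (show Q ≠ b from hbQ.symm)
  have k2 := r8 hm L hL (show b ≠ Q from hbQ)
  linear_combination k1 - k2

lemma r13 {p q : Fin n} (hpq : p ≠ q) :
    L (E p q) p q + L (E q p) q p = 0 := by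
  set X := E p p + E q q + E p q + E q p with hX
  have hXX : X * X = (2:ℂ) • X := by
    rw [hX]
    simp [add_mul, mul_add, E_mul, hpq, hpq.symm]
    module
  have hpw : ∀ j : ℕ, X ^ (j+1) = (2:ℂ)^j • X := by
    intro j
    induction j with
    | zero => rw [pow_one, pow_zero, one_smul]
    | succ j ih => rw [pow_succ, ih, smul_mul_assoc, hXX, smul_smul, ← pow_succ]
  obtain ⟨j, hj⟩ : ∃ j, m - 1 = j + 1 := ⟨m - 2, by omega⟩
  have h1 := hL X
  rw [hj, hpw, mul_smul_comm, trace_smul, smul_eq_mul] at h1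
  have h2 : (L X * X).trace = 0 := by
    rcases mul_eq_zero.mp h1 with h | h
    · exact absurd h (pow_ne_zero _ two_ne_zero)
    · exact h
  rw [hX] at h2
  simp only [map_add, add_mul, mul_add, trace_add, trace_mul_E] at h2
  have k1 := r1 hm L hL p
  have k2 := r1 hm L hL q
  have k3 := r6 hm L hL hpq
  have k4 := r6 hm L hL hpq.symm
  have k7 := r3 hm L hL hpq
  have k8 := r3 hm L hL hpq.symm
  have k9 := r4 hm L hL hpq
  have k10 := r4 hm L hL hpq.symm
  have k11 := r2 hm L hL hpq
  have k12 := r2 hm L hL hpq.symm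
  linear_combination h2 - k1 - k2 - k3 - k4 - k7 - k8 - k9 - k10 - k11 - k12


lemma conjL_hyp {g h : Matrix (Fin n) (Fin n) ℂ} (hhg : h * g = 1) :
    ∀ Y, (conjL L g h Y * Y ^ (m-1)).trace = 0 := by
  intro Y
  obtain ⟨j, hj⟩ : ∃ j, m - 1 = j + 1 := ⟨m - 2, by omega⟩
  have h2 := hL (g * Y * h)
  rw [hj, conj_pow hhg Y j] at h2
  rw [conjL_apply, hj]
  simp only [mul_assoc] at h2 ⊢
  rw [trace_mul_comm]
  simp only [mul_assoc]
  exact h2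

lemma r14 {p q z : Fin n} (hpq : p ≠ q) (hpz : p ≠ z) (hqz : q ≠ z) :
    L (E p q) p q = L (E p z) p z - L (E q z) q z := by
  have hEE : E q z * E q z = 0 := E_mul_ne (Ne.symm hqz) q z
  have hhg : (1 - E q z) * (1 + E q z) = 1 := by
    rw [sub_mul, one_mul, mul_add, mul_one, hEE]; abel
  have hL2 := conjL_hyp hm L hL (g := 1 + E q z) (h := 1 - E q z) hhg
  have key := s_form hm (conjL L (1 + E q z) (1 - E q z)) hL2 hpq
    (Ne.symm hpz) (Ne.symm hqz)
  have hc1 : (1 + E q z) * E p q * (1 - E q z) = E p q - E p z := by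
    rw [add_mul, one_mul, E_mul_ne (Ne.symm hpz) q q, add_zero, mul_sub, mul_one,
      E_mul_same p q z]
  have hc2 : (1 + E q z) * E q q * (1 - E q z) = E q q - E q z := by
    rw [add_mul, one_mul, E_mul_ne (Ne.symm hqz) q q, add_zero, mul_sub, mul_one,
      E_mul_same q q z]
  have expand : ∀ M : Matrix (Fin n) (Fin n) ℂ, (1 - E q z) * M * (1 + E q z)
      = M + M * E q z - E q z * M - E q z * M * E q z := by
    intro M; noncomm_ring
  have cA : ∀ M : Matrix (Fin n) (Fin n) ℂ,
      ((1 - E q z) * M * (1 + E q z)) p z = M p z + M p q := by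
    intro M
    rw [expand M]
    simp [E, Matrix.sub_apply, Matrix.add_apply, hpq, Matrix.single_apply, hpq.symm]
  have cB : ∀ M : Matrix (Fin n) (Fin n) ℂ,
      ((1 - E q z) * M * (1 + E q z)) q z = M q z + M q q - M z z - M z q := by
    intro M
    rw [expand M]
    simp [E, Matrix.sub_apply, Matrix.add_apply]
    try ring
  rw [conjL_apply, conjL_apply, hc1, hc2, map_sub, map_sub, cA, cB] at key
  simp only [Matrix.sub_apply] at key
  have s1 := s_form hm L hL hpq (Ne.symm hpz) (Ne.symm hqz)
  have s2 := s_form hm L hL hpz (Ne.symm hpq) hqz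
  have k0 := r1 hm L hL q
  have k3 := r3 hm L hL hqz
  have kN1 := r6 hm L hL (Ne.symm hqz)
  have kN2 := r4 hm L hL hqz
  have kN3 := r2 hm L hL hqz
  linear_combination key - s1 + s2 + k0 - k3 - kN1 + kN2 + kN3


lemma forward (hn : 0 < n) :
    ∃ B : Matrix (Fin n) (Fin n) ℂ, ∀ X, L X = B * X - X * B := by
  set o : Fin n := ⟨0, hn⟩ with ho
  set B : Matrix (Fin n) (Fin n) ℂ :=
    Matrix.of (fun k i => if k = i then (if i = o then 0 else L (E i o) i o)
      else L (E i i) k i) with hB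
  have hBd : ∀ i : Fin n, B i i = if i = o then 0 else L (E i o) i o := by
    intro i; rw [hB]; simp
  have hBo : ∀ k i : Fin n, k ≠ i → B k i = L (E i i) k i := by
    intro k i hki; rw [hB]; simp [Matrix.of_apply, hki]
  have key : ∀ a b k l : Fin n,
      L (E a b) k l = (if l = b then B k a else 0) - (if k = a then B b l else 0) := by
    intro a b k l
    by_cases hka : k = a
    · subst hka
      by_cases hlb : l = b
      · subst hlb
        rw [if_pos rfl, if_pos rfl, hBd, hBd]
        by_cases hab : k = l
        · subst hab
          rw [r1 hm L hL k]; ring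
        · by_cases hao : k = o
          · subst hao
            have hbo : l ≠ o := fun h => hab (h.symm ▸ rfl)
            rw [if_pos rfl, if_neg hbo]
            have h13 := r13 hm L hL hab
            linear_combination h13
          · by_cases hbo : l = o
            · subst hbo
              rw [if_neg hao, if_pos rfl]
              ring
            · rw [if_neg hao, if_neg hbo]
              exact r14 hm L hL hab hao hbo
      · rw [if_neg hlb, if_pos rfl, zero_sub]
        have hbl : b ≠ l := fun h => hlb h.symm
        rw [hBo b l hbl]
        by_cases hab : k = b
        · subst hab
          have hlk : l ≠ k := fun h => hlb (h ▸ rfl)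
          have h8 := r8 hm L hL hlk
          linear_combination h8
        · by_cases hla : l = k
          · subst hla
            have h3 := r3 hm L hL hab
            linear_combination h3
          · have h12 := r12 hm L hL (show l ≠ k from fun h => hla h)
              (show b ≠ k from fun h => hab h.symm) (show b ≠ l from hbl)
            linear_combination h12
    · by_cases hlb : l = b
      · subst hlb
        rw [if_pos rfl, if_neg hka, sub_zero, hBo k a hka]
        by_cases hab : a = l
        · subst hab; rfl
        · by_cases hkb : k = l
          · subst hkb
            have h4 := r4 hm L hL hab
            have h8 := r8 hm L hL hab
            linear_combination h4 - h8
          · have h9 := r9 hm L hL hab hkb hka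
            have h8 := r8 hm L hL (show a ≠ k from fun h => hka h.symm)
            linear_combination h9 - h8
      · rw [if_neg hlb, if_neg hka, sub_zero]
        by_cases hab : a = b
        · subst hab
          by_cases hkl : k = l
          · subst hkl
            exact r6 hm L hL hka
          · exact r7 hm L hL (show l ≠ k from fun h => hkl h.symm)
              (show a ≠ l from fun h => hlb h.symm) (show a ≠ k from fun h => hka h.symm)
        · by_cases hkl : k = l
          · subst hkl
            exact r5 hm L hL hab hka hlb
          · by_cases hla : l = a
            · subst hla
              by_cases hkb : k = b
              · subst hkb
                exact r2 hm L hL hab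
              · exact r10 hm L hL hab hkb hka
            · exact r11 hm L hL hab hkl hka hla hlb
  refine ⟨B, ?_⟩
  have key' : ∀ a b : Fin n, L (E a b) = B * E a b - E a b * B := by
    intro a b
    ext k l
    rw [Matrix.sub_apply, key a b k l]
    congr 1
    · by_cases hlb : l = b
      · subst hlb; simp [E]
      · rw [if_neg hlb]
        simp [E, hlb]
    · by_cases hka : k = a
      · subst hka; simp [E]
      · rw [if_neg hka]
        simp [E, hka]
  intro X
  have hX : X = ∑ i : Fin n, ∑ j : Fin n, (X i j) • E i j := by
    conv_lhs => rw [matrix_eq_sum_single X]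
    refine Finset.sum_congr rfl fun i _ => Finset.sum_congr rfl fun j _ => ?_
    simp [E]
  calc L X = ∑ i : Fin n, ∑ j : Fin n, (X i j) • L (E i j) := by
        conv_lhs => rw [hX]
        rw [map_sum]
        exact Finset.sum_congr rfl fun i _ => by
          rw [map_sum]
          exact Finset.sum_congr rfl fun j _ => L.map_smul _ _
    _ = ∑ i : Fin n, ∑ j : Fin n,
          (B * ((X i j) • E i j) - ((X i j) • E i j) * B) := by
        refine Finset.sum_congr rfl fun i _ => Finset.sum_congr rfl fun j _ => ?_
        rw [key', smul_sub, mul_smul_comm, smul_mul_assoc]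
    _ = B * X - X * B := by
        simp_rw [Finset.sum_sub_distrib, ← Finset.mul_sum, ← Finset.sum_mul]
        rw [← hX]

end AnnihAux

/-- The Lie algebra annihilator of `tr(X^m)` in `End(M_n(ℂ))` is exactly the
image of the adjoint representation: a linear map `L` on `n × n` complex
matrices satisfies `tr(L(X) · X^(m-1)) = 0` for all `X` iff `L(X) = BX - XB`
for some matrix `B`. -/
theorem annihilator_of_power_trace (n m : ℕ) (hn : 3 ≤ n) (hm : 3 ≤ m)
    (L : Matrix (Fin n) (Fin n) ℂ →ₗ[ℂ] Matrix (Fin n) (Fin n) ℂ) :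
    (∀ X : Matrix (Fin n) (Fin n) ℂ, (L X * X ^ (m - 1)).trace = 0) ↔
      ∃ B : Matrix (Fin n) (Fin n) ℂ,
        ∀ X : Matrix (Fin n) (Fin n) ℂ, L X = B * X - X * B := by
  constructor
  · intro hL
    exact AnnihAux.forward hm L hL (by omega)
  · rintro ⟨B, hB⟩ X
    rw [hB]
    have hcom : X ^ (m-1) * X = X * X ^ (m-1) := by rw [← pow_succ, ← pow_succ']
    have e2 : (X * B * X ^ (m-1)).trace = (B * (X * X ^ (m-1))).trace := by
      rw [mul_assoc, trace_mul_comm, mul_assoc, hcom]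
    rw [sub_mul, trace_sub, mul_assoc, e2, sub_self]
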